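/- arXiv:math/0508608 — 3 statements merged into one kernel-verified Lean document; each statement's English description precedes it below -/
import Mathlib

section
/- W is the internal direct sum of its eigenspaces: the family of subspaces (W_χ), indexed by all characters χ : G →* kˣ, is independent and its supremum is all of W. -/
open Module

/-- The `χ`-eigenspace of a representation `ρ` of `G` on `W`:
`W_χ = {w ∈ W | ρ(g) w = χ(g) • w for all g ∈ G}`. -/
def Representation.charSpace {k G W : Type*} [Field k] [Monoid G]
    [AddCommGroup W] [Module k W]
    (ρ : Representation k G W) (χ : G →* kˣ) : Submodule k W where
  carrier := {w : W | ∀ g : G, ρ g w = (χ g : k) • w}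
  add_mem' := by
    intro a b ha hb g
    simp [map_add, ha g, hb g, smul_add]
  zero_mem' := by
    intro g
    simp
  smul_mem' := by
    intro c w hw g
    simp only [map_smul, hw g]
    rw [smul_comm]

section Aux

variable {k : Type*} [Field k] [CharZero k]
  {G : Type*} [CommGroup G] [Fintype G]
  {W : Type*} [AddCommGroup W] [Module k W]

lemma mem_charSpace_iff (ρ : Representation k G W) (χ : G →* kˣ) (w : W) :
    w ∈ ρ.charSpace χ ↔ ∀ g : G, ρ g w = (χ g : k) • w := Iff.rfl

/-- The projection onto the `χ`-eigenspace. -/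
noncomputable def charProj (ρ : Representation k G W) (χ : G →* kˣ) : W →ₗ[k] W :=
  (Fintype.card G : k)⁻¹ • ∑ g : G, ((χ g⁻¹ : k) • (ρ g))

lemma charProj_apply (ρ : Representation k G W) (χ : G →* kˣ) (w : W) :
    charProj ρ χ w = (Fintype.card G : k)⁻¹ • ∑ g : G, (χ g⁻¹ : k) • ρ g w := by
  simp [charProj, LinearMap.sum_apply]

lemma sum_char_eq_zero {ψ : G →* kˣ} (hψ : ψ ≠ 1) : ∑ g : G, (ψ g : k) = 0 := by
  obtain ⟨g0, hg0⟩ : ∃ g0 : G, ψ g0 ≠ 1 := by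
    by_contra h
    push_neg at h
    exact hψ (MonoidHom.ext fun g => by simpa using h g)
  have key : (ψ g0 : k) * ∑ g : G, (ψ g : k) = ∑ g : G, (ψ g : k) := by
    rw [Finset.mul_sum]
    calc ∑ g : G, (ψ g0 : k) * (ψ g : k)
        = ∑ g : G, (ψ (g0 * g) : k) := by simp [map_mul]
      _ = ∑ g : G, (ψ g : k) := Equiv.sum_comp (Equiv.mulLeft g0) (fun g => (ψ g : k))
  by_contra hS
  exact hg0 (Units.ext (mul_right_cancel₀ hS (by rw [key, Units.val_one, one_mul])))

lemma charProj_mem (ρ : Representation k G W) (χ : G →* kˣ) (w : W) :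
    charProj ρ χ w ∈ ρ.charSpace χ := by
  intro h
  rw [charProj_apply, map_smul, map_sum, smul_comm]
  congr 1
  calc ∑ g : G, ρ h ((χ g⁻¹ : k) • ρ g w)
      = ∑ g : G, (fun g' => (χ (h⁻¹ * g')⁻¹ : k) • ρ g' w) (h * g) := by
        refine Finset.sum_congr rfl fun g _ => ?_
        simp only [map_smul, inv_mul_cancel_left]
        rw [map_mul, Module.End.mul_apply]
    _ = ∑ g : G, (χ (h⁻¹ * g)⁻¹ : k) • ρ g w :=
        Equiv.sum_comp (Equiv.mulLeft h) (fun g' => (χ (h⁻¹ * g')⁻¹ : k) • ρ g' w)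
    _ = (χ h : k) • ∑ g : G, (χ g⁻¹ : k) • ρ g w := by
        rw [Finset.smul_sum]
        refine Finset.sum_congr rfl fun g _ => ?_
        rw [smul_smul]
        congr 1
        rw [mul_inv_rev, inv_inv, map_mul]
        push_cast
        ring

lemma charProj_eq_self (ρ : Representation k G W) (χ : G →* kˣ) {w : W}
    (hw : w ∈ ρ.charSpace χ) : charProj ρ χ w = w := by
  rw [charProj_apply]
  have : ∀ g : G, (χ g⁻¹ : k) • ρ g w = w := by
    intro g
    rw [hw g, smul_smul, ← Units.val_mul, ← map_mul, inv_mul_cancel, map_one, Units.val_one,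
      one_smul]
  rw [Finset.sum_congr rfl fun g _ => this g, Finset.sum_const, Finset.card_univ,
    ← Nat.cast_smul_eq_nsmul k, smul_smul, inv_mul_cancel₀, one_smul]
  exact Nat.cast_ne_zero.mpr Fintype.card_ne_zero

lemma charProj_eq_zero (ρ : Representation k G W) {χ χ' : G →* kˣ} (hne : χ' ≠ χ) {w : W}
    (hw : w ∈ ρ.charSpace χ') : charProj ρ χ w = 0 := by
  rw [charProj_apply]
  have : ∀ g : G, (χ g⁻¹ : k) • ρ g w = (((χ⁻¹ * χ') g : kˣ) : k) • w := by
    intro g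
    rw [hw g, smul_smul]
    congr 1
    rw [MonoidHom.mul_apply, MonoidHom.inv_apply, Units.val_mul, map_inv]
  rw [Finset.sum_congr rfl fun g _ => this g, ← Finset.sum_smul, sum_char_eq_zero, zero_smul,
    smul_zero]
  intro h
  exact hne (inv_mul_eq_one.mp h).symm

end Aux

/-- `W` is the internal direct sum of the eigenspaces `W_χ`, as `χ` ranges over all
characters `χ : G →* kˣ`: the family is independent and its supremum is `⊤`. -/
theorem charSpace_iSupIndep_and_iSup_eq_top
    {k : Type*} [Field k] [CharZero k]
    {G : Type*} [CommGroup G] [Fintype G]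
    {W : Type*} [AddCommGroup W] [Module k W] [FiniteDimensional k W]
    (hζ : ∃ ζ : k, IsPrimitiveRoot ζ (Monoid.exponent G))
    (ρ : Representation k G W) :
    iSupIndep (fun χ : G →* kˣ => ρ.charSpace χ) ∧
      (⨆ χ : G →* kˣ, ρ.charSpace χ) = ⊤ := by
  haveI : NeZero (Monoid.exponent G) := ⟨Monoid.exponent_ne_zero_of_finite⟩
  haveI : HasEnoughRootsOfUnity k (Monoid.exponent G) := ⟨hζ, inferInstance⟩
  obtain ⟨e⟩ := CommGroup.monoidHom_mulEquiv_of_hasEnoughRootsOfUnity G k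
  haveI : Fintype (G →* kˣ) := Fintype.ofEquiv G e.symm.toEquiv
  have hcard : Fintype.card (G →* kˣ) = Fintype.card G := Fintype.card_congr e.toEquiv
  have hsep : ∀ a : G, a ≠ 1 → ∃ φ : G →* kˣ, φ a ≠ 1 := fun a ha =>
    CommGroup.exists_apply_ne_one_of_hasEnoughRootsOfUnity G k ha
  -- second orthogonality
  have orth2 : ∀ g : G, g ≠ 1 → ∑ χ : G →* kˣ, (χ g : k) = 0 := by
    intro g hg
    obtain ⟨φ, hφ⟩ := hsep g hg
    have key : (φ g : k) * ∑ χ : G →* kˣ, (χ g : k) = ∑ χ : G →* kˣ, (χ g : k) := by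
      rw [Finset.mul_sum]
      calc ∑ χ : G →* kˣ, (φ g : k) * (χ g : k)
          = ∑ χ : G →* kˣ, (((φ * χ) g : kˣ) : k) := by simp
        _ = ∑ χ : G →* kˣ, (χ g : k) :=
            Equiv.sum_comp (Equiv.mulLeft φ) (fun χ : G →* kˣ => (χ g : k))
    by_contra hS
    exact hφ (Units.ext (mul_right_cancel₀ hS (by rw [key, Units.val_one, one_mul])))
  have sum_proj : ∀ w : W, ∑ χ : G →* kˣ, charProj ρ χ w = w := by
    intro w
    have h1 : ∑ χ : G →* kˣ, charProj ρ χ w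
        = (Fintype.card G : k)⁻¹ • ∑ g : G, (∑ χ : G →* kˣ, (χ g⁻¹ : k)) • ρ g w := by
      simp only [charProj_apply]
      rw [← Finset.smul_sum, Finset.sum_comm]
      simp only [Finset.sum_smul]
    rw [h1]
    rw [Fintype.sum_eq_single (1 : G) (fun g hg => by
      rw [orth2 g⁻¹ (by simpa using hg), zero_smul])]
    have h2 : ∑ χ : G →* kˣ, ((χ ((1:G)⁻¹) : k)) = (Fintype.card G : k) := by
      simp [Finset.sum_const, Finset.card_univ, nsmul_eq_mul, hcard]
    rw [h2, map_one, Module.End.one_apply, smul_smul,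
      inv_mul_cancel₀ (Nat.cast_ne_zero.mpr (@Fintype.card_ne_zero G _ _)), one_smul]
  constructor
  · intro χ
    rw [disjoint_iff_inf_le]
    rintro w ⟨hw1, hw2⟩
    have h2 : charProj ρ χ w = 0 := by
      have hle : (⨆ (χ' : G →* kˣ) (_ : χ' ≠ χ), ρ.charSpace χ') ≤
          LinearMap.ker (charProj ρ χ) := by
        refine iSup₂_le fun χ' hχ' v hv => ?_
        exact LinearMap.mem_ker.mpr (charProj_eq_zero ρ hχ' hv)
      exact hle hw2
    rw [Submodule.mem_bot, ← charProj_eq_self ρ χ hw1, h2]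
  · rw [eq_top_iff]
    intro w _
    rw [← sum_proj w]
    exact Submodule.sum_mem _ fun χ _ =>
      Submodule.mem_iSup_of_mem χ (charProj_mem ρ χ w)
end

section
/- Let H be a subgroup of G. Then dim_k W^H = ∑_{χ : G →* kˣ, χ trivial on H} dim_k W_χ, where W^H = {w ∈ W | ρ(h) w = w for all h ∈ H} and the sum ranges over all characters of G that are trivial on H. -/
open Module

/-- The subspace `W^H = {w ∈ W | ρ(h) w = w for all h ∈ H}` of invariants under a
subgroup `H` of `G`. -/
def Representation.subgroupInvariants {k G W : Type*} [Field k] [Group G]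
    [AddCommGroup W] [Module k W]
    (ρ : Representation k G W) (H : Subgroup G) : Submodule k W where
  carrier := {w : W | ∀ h ∈ H, ρ h w = w}
  add_mem' := by
    intro a b ha hb h hh
    simp [map_add, ha h hh, hb h hh]
  zero_mem' := by
    intro h hh
    simp
  smul_mem' := by
    intro c w hw h hh
    simp [map_smul, hw h hh]

open Module LinearMap

lemma aux_finite_monoidHom (k : Type*) [Field k] (Q : Type*) [CommGroup Q] [Finite Q] :
    Finite (Q →* kˣ) := by
  have : Fintype Q := Fintype.ofFinite Q
  have : NeZero (Fintype.card Q) := ⟨Fintype.card_ne_zero⟩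
  let S := rootsOfUnity (Fintype.card Q) k
  have : Finite (Q →* S) := Finite.of_injective _ DFunLike.coe_injective
  refine Finite.of_surjective (fun f : Q →* S ↦ (Subgroup.subtype _).comp f) fun f ↦ ?_
  have Hm : ∀ a, f a ∈ S := fun a ↦ by
    simp only [S, mem_rootsOfUnity, ← map_pow, pow_card_eq_one, map_one]
  exact ⟨MonoidHom.codRestrict f S Hm, rfl⟩

lemma aux_sum_monoidHom {k : Type*} [Field k] {Q : Type*} [CommGroup Q] [Finite Q]
    [Fintype (Q →* kˣ)] [DecidableEq Q] [HasEnoughRootsOfUnity k (Monoid.exponent Q)] (q : Q) :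
    ∑ ψ : Q →* kˣ, (ψ q : k) = if q = 1 then (Nat.card Q : k) else 0 := by
  split_ifs with h
  · subst h
    simp only [map_one, Units.val_one, Finset.sum_const, Finset.card_univ, nsmul_eq_mul, mul_one]
    rw [← Nat.card_eq_fintype_card]
    exact congrArg Nat.cast (Nat.card_congr
      (CommGroup.monoidHom_mulEquiv_of_hasEnoughRootsOfUnity Q k).some.toEquiv)
  · obtain ⟨φ, hφ⟩ := CommGroup.exists_apply_ne_one_of_hasEnoughRootsOfUnity Q k h
    refine eq_zero_of_mul_eq_self_left (fun hc ↦ hφ (Units.ext hc)) ?_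
    rw [Finset.mul_sum]
    exact Fintype.sum_bijective (φ * ·) (Group.mulLeft_bijective φ) _ _ fun ψ ↦ by
      simp [Units.val_mul, mul_comm]

section proj

variable {k G W : Type*} [Field k] [CommGroup G] [Fintype G]
    [AddCommGroup W] [Module k W] (ρ : Representation k G W)

lemma aux_isProj_charSpace (hk : (Fintype.card G : k) ≠ 0) (χ : G →* kˣ) :
    LinearMap.IsProj (ρ.charSpace χ)
      ((Fintype.card G : k)⁻¹ • ∑ g : G, (χ g⁻¹ : k) • (ρ g : W →ₗ[k] W)) := by
  set F : W →ₗ[k] W := ∑ g : G, (χ g⁻¹ : k) • (ρ g : W →ₗ[k] W) with hF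
  have hFw : ∀ w, F w = ∑ g : G, (χ g⁻¹ : k) • ρ g w := by
    intro w; simp [hF, LinearMap.sum_apply]
  have claim1 : ∀ (g₀ : G) (w : W), ρ g₀ (F w) = (χ g₀ : k) • F w := by
    intro g₀ w
    rw [hFw, map_sum, Finset.smul_sum]
    refine Fintype.sum_equiv (Equiv.mulLeft g₀) _ _ fun g ↦ ?_
    rw [map_smul]
    have : ρ g₀ (ρ g w) = ρ (g₀ * g) w := by
      rw [map_mul]; rfl
    rw [this]
    simp only [Equiv.coe_mulLeft, mul_inv_rev, smul_smul]
    rw [← Units.val_mul, ← map_mul, show g₀ * (g⁻¹ * g₀⁻¹) = g⁻¹ by rw [mul_comm g₀, mul_assoc, inv_mul_cancel, mul_one]]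
  constructor
  · intro w
    show ∀ g₀ : G, ρ g₀ (((Fintype.card G : k)⁻¹ • F) w) = (χ g₀ : k) • ((Fintype.card G : k)⁻¹ • F) w
    intro g₀
    rw [LinearMap.smul_apply, map_smul, claim1, smul_comm]
  · intro w hw
    have hw' : ∀ g : G, ρ g w = (χ g : k) • w := hw
    have : F w = (Fintype.card G : k) • w := by
      rw [hFw]
      have : ∀ g : G, (χ g⁻¹ : k) • ρ g w = w := by
        intro g
        rw [hw' g, smul_smul, ← Units.val_mul, ← map_mul, inv_mul_cancel, map_one, Units.val_one,
          one_smul]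
      rw [Finset.sum_congr rfl fun g _ ↦ this g]
      simp [Finset.card_univ, Nat.cast_smul_eq_nsmul]
    rw [LinearMap.smul_apply, this, smul_smul, inv_mul_cancel₀ hk, one_smul]

omit [Fintype G] in
lemma aux_isProj_invariants {H : Subgroup G} [Fintype H]
    (hk : (Fintype.card H : k) ≠ 0) :
    LinearMap.IsProj (ρ.subgroupInvariants H)
      ((Fintype.card H : k)⁻¹ • ∑ h : H, (ρ (h : G) : W →ₗ[k] W)) := by
  set F : W →ₗ[k] W := ∑ h : H, (ρ (h : G) : W →ₗ[k] W) with hF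
  have hFw : ∀ w, F w = ∑ h : H, ρ (h : G) w := by
    intro w; simp [hF, LinearMap.sum_apply]
  constructor
  · intro w
    show ∀ h' ∈ H, ρ h' (((Fintype.card H : k)⁻¹ • F) w) = ((Fintype.card H : k)⁻¹ • F) w
    intro h' hh'
    rw [LinearMap.smul_apply, map_smul]
    congr 1
    rw [hFw, map_sum]
    refine Fintype.sum_equiv (Equiv.mulLeft (⟨h', hh'⟩ : H)) _ _ fun h ↦ ?_
    have : ρ h' (ρ (h : G) w) = ρ (h' * (h : G)) w := by
      rw [map_mul]; rfl
    rw [this]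
    rfl
  · intro w hw
    have hw' : ∀ h ∈ H, ρ h w = w := hw
    have : F w = (Fintype.card H : k) • w := by
      rw [hFw, Finset.sum_congr rfl fun (h : H) _ ↦ hw' (h : G) h.2]
      simp [Finset.card_univ, Nat.cast_smul_eq_nsmul]
    rw [LinearMap.smul_apply, this, smul_smul, inv_mul_cancel₀ hk, one_smul]

end proj

/-- `dim_k W^H = ∑_{χ : G →* kˣ, χ trivial on H} dim_k W_χ`. -/
theorem finrank_subgroupInvariants_eq_sum
    {k : Type*} [Field k] [CharZero k]
    {G : Type*} [CommGroup G] [Fintype G]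
    {W : Type*} [AddCommGroup W] [Module k W] [FiniteDimensional k W]
    (hζ : ∃ ζ : k, IsPrimitiveRoot ζ (Monoid.exponent G))
    (ρ : Representation k G W) (H : Subgroup G) :
    finrank k (ρ.subgroupInvariants H)
      = ∑ᶠ χ ∈ {χ : G →* kˣ | ∀ h ∈ H, χ h = 1}, finrank k (ρ.charSpace χ) := by
  classical
  have hexp : NeZero (Monoid.exponent G) := ⟨Monoid.exponent_ne_zero_of_finite⟩
  have hE : HasEnoughRootsOfUnity k (Monoid.exponent G) := ⟨hζ, inferInstance⟩
  have hFin : Finite (G →* kˣ) := aux_finite_monoidHom k G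
  have : Fintype (G →* kˣ) := Fintype.ofFinite _
  have : Fintype H := Fintype.ofFinite H
  have hSfin : ({χ : G →* kˣ | ∀ h ∈ H, χ h = 1}).Finite := Set.toFinite _
  rw [finsum_mem_eq_finite_toFinset_sum _ hSfin]
  set T := hSfin.toFinset with hT
  have hTmem : ∀ χ : G →* kˣ, χ ∈ T ↔ ∀ h ∈ H, χ h = 1 := fun χ ↦ hSfin.mem_toFinset
  -- orthogonality sum over characters trivial on H
  have hQenough : HasEnoughRootsOfUnity k (Monoid.exponent (G ⧸ H)) :=
    HasEnoughRootsOfUnity.of_dvd k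
      (MonoidHom.exponent_dvd (f := QuotientGroup.mk' H) (QuotientGroup.mk'_surjective H))
  have : Fintype ((G ⧸ H) →* kˣ) := @Fintype.ofFinite _ (aux_finite_monoidHom k _)
  have key : ∀ a : G, ∑ χ ∈ T, ((χ a : k)) = if a ∈ H then (H.index : k) else 0 := by
    intro a
    have h1 : ∑ ψ : (G ⧸ H) →* kˣ, (ψ (a : G ⧸ H) : k) = ∑ χ ∈ T, (χ a : k) := by
      refine Finset.sum_bij (fun ψ _ ↦ ψ.comp (QuotientGroup.mk' H)) ?_ ?_ ?_ ?_
      · intro ψ _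
        rw [hTmem]
        intro h hh
        simp [(QuotientGroup.eq_one_iff h).mpr hh]
      · intro ψ₁ _ ψ₂ _ hcomp
        refine MonoidHom.ext fun q ↦ ?_
        induction q using QuotientGroup.induction_on with
        | H g => exact DFunLike.congr_fun hcomp g
      · intro χ hχ
        rw [hTmem] at hχ
        refine ⟨QuotientGroup.lift H χ (fun x hx ↦ MonoidHom.mem_ker.mpr (hχ x hx)),
          Finset.mem_univ _, ?_⟩
        refine MonoidHom.ext fun g ↦ ?_
        rfl
      · intro ψ _
        rfl
    rw [← h1, aux_sum_monoidHom]
    by_cases ha : a ∈ H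
    · simp [ha, QuotientGroup.eq_one_iff, Subgroup.index_eq_card]
    · simp [ha, QuotientGroup.eq_one_iff]
  -- projections and traces
  have hGcard : (Fintype.card G : k) ≠ 0 := Nat.cast_ne_zero.mpr Fintype.card_ne_zero
  have hHcard : (Fintype.card ↥H : k) ≠ 0 := Nat.cast_ne_zero.mpr Fintype.card_ne_zero
  have hPH := aux_isProj_invariants ρ (H := H) hHcard
  have hPchi := fun χ : G →* kˣ ↦ aux_isProj_charSpace ρ hGcard χ
  have main : ((finrank k (ρ.subgroupInvariants H) : k))
      = ((∑ χ ∈ T, finrank k (ρ.charSpace χ) : ℕ) : k) := by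
    push_cast
    rw [← hPH.trace]
    have hchitr : ∀ χ : G →* kˣ, (finrank k (ρ.charSpace χ) : k)
        = (Fintype.card G : k)⁻¹ * ∑ g : G, (χ g⁻¹ : k) * LinearMap.trace k W (ρ g) := by
      intro χ
      rw [← (hPchi χ).trace, map_smul, map_sum, smul_eq_mul]
      congr 1
      refine Finset.sum_congr rfl fun g _ ↦ ?_
      rw [map_smul, smul_eq_mul]
    calc (LinearMap.trace k W) ((Fintype.card ↥H : k)⁻¹ • ∑ h : ↥H, (ρ (h : G) : W →ₗ[k] W))
        = (Fintype.card ↥H : k)⁻¹ * ∑ h : ↥H, LinearMap.trace k W (ρ (h : G)) := by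
          rw [map_smul, map_sum, smul_eq_mul]
      _ = (Fintype.card G : k)⁻¹ * ((H.index : k)
            * ∑ h : ↥H, LinearMap.trace k W (ρ (h : G))) := by
          rw [← mul_assoc]
          congr 1
          have hcard : (Fintype.card ↥H : k) * (H.index : k) = (Fintype.card G : k) := by
            rw [← Nat.cast_mul]
            congr 1
            rw [← Nat.card_eq_fintype_card, ← Nat.card_eq_fintype_card]
            exact Subgroup.card_mul_index H
          field_simp
          rw [← hcard, mul_comm]
      _ = (Fintype.card G : k)⁻¹
            * ∑ g : G, (if g ∈ H then (H.index : k) else 0) * LinearMap.trace k W (ρ g) := by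
          congr 1
          have hind : ∑ g : G, (if g ∈ H then (H.index : k) else 0) * LinearMap.trace k W (ρ g)
              = (H.index : k) * ∑ h : ↥H, LinearMap.trace k W (ρ (h : G)) := by
            rw [Finset.mul_sum,
              ← Finset.sum_subtype (Finset.univ.filter (· ∈ H)) (by simp)
                (fun g ↦ (H.index : k) * LinearMap.trace k W (ρ g)),
              Finset.sum_filter]
            refine Finset.sum_congr rfl fun g _ ↦ ?_
            by_cases hg : g ∈ H <;> simp [hg]
          exact hind.symm
      _ = ∑ χ ∈ T, (finrank k (ρ.charSpace χ) : k) := by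
          rw [Finset.sum_congr rfl fun χ _ ↦ hchitr χ, ← Finset.mul_sum]
          congr 1
          rw [Finset.sum_comm]
          refine Finset.sum_congr rfl fun g _ ↦ ?_
          rw [← Finset.sum_mul, key g⁻¹, inv_mem_iff]
  exact Nat.cast_injective main
end

section
/- Let H be a subgroup of G and let ψ : H →* kˣ be a character of H. Then the ψ-eigenspace of W for the restricted action of H satisfies dim_k {w ∈ W | ρ(h) w = ψ(h) • w for all h ∈ H} = ∑_{χ : G →* kˣ, χ|_H = ψ} dim_k W_χ, the sum ranging over those characters χ of G whose restriction to H equals ψ. -/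
open Module

section Diag
open Polynomial

variable {k : Type*} [Field k] {U : Type*} [AddCommGroup U] [Module k U]

lemma ker_aeval_prod_X_sub_C (f : Module.End k U) (s : Finset k) :
    LinearMap.ker (aeval f (∏ μ ∈ s, (X - C μ))) = ⨆ μ ∈ s, f.eigenspace μ := by
  classical
  induction s using Finset.induction_on with
  | empty => simp [Module.End.one_eq_id]
  | @insert a s ha ih =>
    have hcop : IsCoprime (X - C a) (∏ μ ∈ s, (X - C μ)) :=
      IsCoprime.prod_right fun b hb =>
        Polynomial.pairwise_coprime_X_sub_C (Function.injective_id (α := k))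
          (by rintro rfl; exact ha hb)
    rw [Finset.prod_insert ha, ← Polynomial.sup_ker_aeval_eq_ker_aeval_mul_of_coprime f hcop, ih,
      Finset.iSup_insert]
    congr 1
    rw [Module.End.eigenspace_def]
    congr 1
    simp [Module.algebraMap_end_eq_smul_id, Module.End.one_eq_id]

lemma iSup_eigenspace_eq_top_of_pow_eq_one [FiniteDimensional k U]
    (f : Module.End k U) {m : ℕ} (hm : 0 < m) (hmk : (m : k) ≠ 0)
    {ζ : k} (hζ : IsPrimitiveRoot ζ m) (hf : f ^ m = 1) :
    (⨆ μ, f.maxGenEigenspace μ = ⊤) ∧ f.IsFinitelySemisimple := by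
  have hsq : Squarefree (X ^ m - 1 : k[X]) := by
    have := (Polynomial.separable_X_pow_sub_C (1 : k) hmk one_ne_zero).squarefree
    simpa using this
  have haev : aeval f (X ^ m - 1 : k[X]) = 0 := by simp [hf]
  have hss : f.IsSemisimple := Module.End.isSemisimple_of_squarefree_aeval_eq_zero hsq haev
  have hfs : f.IsFinitelySemisimple := hss.isFinitelySemisimple
  refine ⟨?_, hfs⟩
  have htop : LinearMap.ker (aeval f (X ^ m - 1 : k[X])) = ⊤ := by
    rw [haev]; exact LinearMap.ker_zero
  rw [Polynomial.X_pow_sub_one_eq_prod hm hζ, ker_aeval_prod_X_sub_C] at htop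
  rw [eq_top_iff, ← htop]
  refine iSup₂_le fun μ _ => ?_
  rw [← hfs.maxGenEigenspace_eq_eigenspace]
  exact le_iSup _ μ

end Diag

lemma finite_characters {k G : Type*} [Field k] [CommGroup G] [Fintype G] :
    Finite (G →* kˣ) := by
  classical
  apply Finite.of_injective
    (fun (χ : G →* kˣ) (g : G) => (⟨χ g, by
        rw [mem_rootsOfUnity, ← map_pow, Monoid.pow_exponent_eq_one, map_one]⟩ :
      rootsOfUnity (Monoid.exponent G) k))
  intro χ₁ χ₂ h
  ext g
  exact congrArg (fun x => ((x : kˣ) : k)) (Subtype.ext_iff.mp (congrFun h g))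

lemma finrank_eq_finsum_charSpace {k G U : Type*} [Field k] [CharZero k]
    [CommGroup G] [Fintype G] [AddCommGroup U] [Module k U] [FiniteDimensional k U]
    (hζ : ∃ ζ : k, IsPrimitiveRoot ζ (Monoid.exponent G)) (σ : Representation k G U) :
    finrank k U = ∑ᶠ χ : G →* kˣ, finrank k (σ.charSpace χ) := by
  classical
  haveI : Finite (G →* kˣ) := finite_characters
  haveI : Fintype (G →* kˣ) := Fintype.ofFinite _
  obtain ⟨ζ, hζ⟩ := hζ
  set m := Monoid.exponent G with hm_def
  have hm : 0 < m := Monoid.ExponentExists.of_finite.exponent_pos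
  have hmk : (m : k) ≠ 0 := Nat.cast_ne_zero.mpr hm.ne'
  set f : G → Module.End k U := fun g => σ g with hf_def
  have hcomm : ∀ i j : G, Commute (f i) (f j) := fun i j => by
    simp only [hf_def, Commute, SemiconjBy, ← map_mul, mul_comm]
  have hpow : ∀ g, f g ^ m = 1 := fun g => by
    simp only [hf_def]
    rw [← map_pow, Monoid.pow_exponent_eq_one, map_one]
  have hdiag := fun g => iSup_eigenspace_eq_top_of_pow_eq_one (f g) hm hmk hζ (hpow g)
  have htop : ⨆ χ : G → k, ⨅ g, (f g).maxGenEigenspace (χ g) = ⊤ :=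
    Module.End.iSup_iInf_maxGenEigenspace_eq_top_of_iSup_maxGenEigenspace_eq_top_of_commute f
      (fun i j _ => hcomm i j) (fun g => (hdiag g).1)
  have hindep : iSupIndep fun χ : G → k => ⨅ g, (f g).maxGenEigenspace (χ g) :=
    Module.End.independent_iInf_maxGenEigenspace_of_forall_mapsTo f
      (fun i j φ => Module.End.mapsTo_maxGenEigenspace_of_comm (hcomm j i) φ)
  have hcs : ∀ χ : G →* kˣ,
      σ.charSpace χ = ⨅ g, (f g).maxGenEigenspace ((χ g : k)) := by
    intro χ
    ext w
    simp only [Submodule.mem_iInf, (hdiag _).2.maxGenEigenspace_eq_eigenspace,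
      Module.End.mem_eigenspace_iff]
    rfl
  have hinj : Function.Injective (fun (χ : G →* kˣ) (g : G) => (χ g : k)) := by
    intro χ₁ χ₂ h; ext g; exact congrFun h g
  have hindep' : iSupIndep fun χ : G →* kˣ => σ.charSpace χ := by
    have heq : (fun χ₀ : G →* kˣ => σ.charSpace χ₀)
        = (fun χ : G → k => ⨅ g, (f g).maxGenEigenspace (χ g))
          ∘ (fun (χ₀ : G →* kˣ) (g : G) => (χ₀ g : k)) := funext fun χ₀ => hcs χ₀
    rw [heq]
    exact hindep.comp hinj
  have htop' : ⨆ χ₀ : G →* kˣ, σ.charSpace χ₀ = ⊤ := by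
    rw [eq_top_iff, ← htop]
    refine iSup_le fun χ => ?_
    by_cases hbot : (⨅ g, (f g).maxGenEigenspace (χ g)) = ⊥
    · rw [hbot]; exact bot_le
    · obtain ⟨w, hw, hw0⟩ := Submodule.exists_mem_ne_zero_of_ne_bot hbot
      have hwχ : ∀ g, σ g w = χ g • w := fun g => by
        have h1 := Submodule.mem_iInf _ |>.mp hw g
        rw [(hdiag g).2.maxGenEigenspace_eq_eigenspace] at h1
        exact Module.End.mem_eigenspace_iff.mp h1
      have hcancel : ∀ a b : k, a • w = b • w → a = b := fun a b hab => by
        have h2 : (a - b) • w = 0 := by rw [sub_smul, hab, sub_self]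
        rcases smul_eq_zero.mp h2 with h | h
        · exact sub_eq_zero.mp h
        · exact absurd h hw0
      have hmul : ∀ g h : G, χ (g * h) = χ g * χ h := fun g h => by
        apply hcancel
        rw [← hwχ, map_mul, Module.End.mul_apply, hwχ, map_smul, hwχ, smul_smul, mul_comm]
      have hone : χ 1 = 1 := by
        apply hcancel
        rw [← hwχ, map_one, Module.End.one_apply, one_smul]
      have hu1 : ∀ g : G, χ g * χ g⁻¹ = 1 := fun g => by
        rw [← hmul, mul_inv_cancel, hone]
      have hu2 : ∀ g : G, χ g⁻¹ * χ g = 1 := fun g => by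
        rw [← hmul, inv_mul_cancel, hone]
      set χ₀ : G →* kˣ :=
        MonoidHom.mk' (fun g => ⟨χ g, χ g⁻¹, hu1 g, hu2 g⟩)
          (fun g h => Units.ext (hmul g h)) with hχ₀
      have hEq : (⨅ g, (f g).maxGenEigenspace (χ g)) = σ.charSpace χ₀ := by
        rw [hcs χ₀]; rfl
      rw [hEq]
      exact le_iSup (fun χ₀ : G →* kˣ => σ.charSpace χ₀) χ₀
  have hint := DirectSum.isInternal_submodule_of_iSupIndep_of_iSup_eq_top hindep' htop'
  rw [finsum_eq_sum_of_fintype]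
  calc finrank k U
      = finrank k (DirectSum (G →* kˣ) fun χ₀ => (σ.charSpace χ₀ : Submodule k U)) :=
        (LinearEquiv.finrank_eq (LinearEquiv.ofBijective (DirectSum.coeLinearMap fun χ₀ : G →* kˣ => σ.charSpace χ₀) hint)).symm
    _ = ∑ χ₀ : G →* kˣ, finrank k (σ.charSpace χ₀) := Module.finrank_directSum k _

/-- For a subgroup `H ≤ G` and a character `ψ : H →* kˣ`, the `ψ`-eigenspace of `W` for
the restricted action of `H` satisfies
`dim_k {w ∈ W | ρ(h) w = ψ(h) • w for all h ∈ H} = ∑_{χ : G →* kˣ, χ|_H = ψ} dim_k W_χ`. -/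
theorem finrank_restricted_charSpace_eq_sum
    {k : Type*} [Field k] [CharZero k]
    {G : Type*} [CommGroup G] [Fintype G]
    {W : Type*} [AddCommGroup W] [Module k W] [FiniteDimensional k W]
    (hζ : ∃ ζ : k, IsPrimitiveRoot ζ (Monoid.exponent G))
    (ρ : Representation k G W) (H : Subgroup G) (ψ : ↥H →* kˣ) :
    finrank k (Representation.charSpace (MonoidHom.comp ρ H.subtype) ψ)
      = ∑ᶠ χ ∈ {χ : G →* kˣ | MonoidHom.comp χ H.subtype = ψ},
          finrank k (ρ.charSpace χ) := by
  classical
  haveI : Finite (G →* kˣ) := finite_characters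
  haveI : Fintype (G →* kˣ) := Fintype.ofFinite _
  set V : Submodule k W := Representation.charSpace (MonoidHom.comp ρ H.subtype) ψ with hV
  have hmemV : ∀ w : W, w ∈ V ↔ ∀ h : H, ρ (h : G) w = (ψ h : k) • w := fun w => Iff.rfl
  have hVmaps : ∀ g : G, ∀ w ∈ V, ρ g w ∈ V := by
    intro g w hw
    rw [hmemV] at hw ⊢
    intro h
    calc ρ (h : G) (ρ g w) = ρ ((h : G) * g) w := by rw [map_mul]; rfl
      _ = ρ (g * (h : G)) w := by rw [mul_comm]
      _ = ρ g (ρ (h : G) w) := by rw [map_mul]; rfl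
      _ = ρ g ((ψ h : k) • w) := by rw [hw h]
      _ = (ψ h : k) • ρ g w := by rw [map_smul]
  have hVmaps' : ∀ g : G, Set.MapsTo (ρ g) V V := fun g w hw => hVmaps g w hw
  set σ : Representation k G V :=
    { toFun := fun g => (ρ g).restrict (hVmaps' g)
      map_one' := by
        ext v
        simp [LinearMap.restrict_apply]
      map_mul' := fun g h => by
        ext v
        simp [LinearMap.restrict_apply]; rfl } with hσ
  have hσ_apply : ∀ (g : G) (v : V), ((σ g v : V) : W) = ρ g (v : W) := fun g v => rfl
  have hmap : ∀ χ : G →* kˣ,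
      (Representation.charSpace σ χ).map V.subtype = V ⊓ ρ.charSpace χ := by
    intro χ
    ext x
    constructor
    · rintro ⟨v, hv, rfl⟩
      refine ⟨v.2, fun g => ?_⟩
      have := congrArg (Subtype.val : V → W) (hv g)
      simpa [hσ_apply] using this
    · rintro ⟨hxV, hxχ⟩
      refine ⟨⟨x, hxV⟩, fun g => Subtype.ext ?_, rfl⟩
      simpa [hσ_apply] using hxχ g
  have main := finrank_eq_finsum_charSpace hζ σ
  rw [show finrank k V = finrank k (Representation.charSpace (MonoidHom.comp ρ H.subtype) ψ)
    from rfl] at main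
  rw [main, finsum_eq_sum_of_fintype, finsum_mem_def, finsum_eq_sum_of_fintype]
  refine Finset.sum_congr rfl fun χ _ => ?_
  by_cases hres : MonoidHom.comp χ H.subtype = ψ
  · rw [Set.indicator_of_mem (by exact hres)]
    have hle : ρ.charSpace χ ≤ V := by
      intro w hw
      rw [hmemV]
      intro h
      rw [hw (h : G)]
      congr 1
      exact congrArg (fun u : kˣ => (u : k)) (DFunLike.congr_fun hres h)
    rw [← Submodule.finrank_map_subtype_eq V (Representation.charSpace σ χ), hmap χ,
      inf_eq_right.mpr hle]
  · rw [Set.indicator_of_notMem (by exact hres)]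
    have hbot : V ⊓ ρ.charSpace χ = ⊥ := by
      have : ¬ ∀ h : H, (MonoidHom.comp χ H.subtype) h = ψ h := fun hh => hres (MonoidHom.ext hh)
      push_neg at this
      obtain ⟨h, hh⟩ := this
      have hh' : (χ (h : G) : k) ≠ (ψ h : k) := fun e => hh (Units.ext e)
      rw [eq_bot_iff]
      rintro x ⟨hxV, hxχ⟩
      have h1 : ρ (h : G) x = (χ (h : G) : k) • x := hxχ (h : G)
      have h2 : ρ (h : G) x = (ψ h : k) • x := (hmemV x).mp hxV h
      have h3 : ((χ (h : G) : k) - (ψ h : k)) • x = 0 := by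
        rw [sub_smul, ← h1, ← h2, sub_self]
      rcases smul_eq_zero.mp h3 with h4 | h4
      · exact absurd (sub_eq_zero.mp h4) hh'
      · simpa using h4
    rw [← Submodule.finrank_map_subtype_eq V (Representation.charSpace σ χ), hmap χ, hbot]
    simp
end
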